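/- In the Hall affine plane A_H, any two lines of BF lie in the same orbit of the collineation group of A_H, and any two lines of NBF lie in the same orbit of the collineation group of A_H; in particular, the collineation group has at most two orbits on the set of lines. -/

import Mathlib

open Polynomial

/-- The Hall system multiplication on `F × F`, with defining polynomial `x^2 - r*x - s`. -/
def hallMul {F : Type*} [Field F] [DecidableEq F] (r s : F) (a b : F × F) : F × F :=
  if b.2 = 0 then (a.1 * b.1, a.2 * b.1)
  else (a.1 * b.1 - a.2 * b.2⁻¹ * (b.1 ^ 2 - r * b.1 - s),
        a.1 * b.2 - a.2 * b.1 + a.2 * r)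

/-- Vertical line `[c] = {(c, y)}` in the Hall affine plane. -/
def vertLine {F : Type*} (c : F × F) : Set ((F × F) × (F × F)) := {P | P.1 = c}

/-- Non-vertical line `[m, k] = {(x, x·m + k)}` in the Hall affine plane. -/
def slopeLine {F : Type*} [Field F] [DecidableEq F] (r s : F) (m k : F × F) :
    Set ((F × F) × (F × F)) :=
  {P | P.2 = hallMul r s P.1 m + k}

/-- The lines of the Hall affine plane `A_H`. -/
def IsHallLine {F : Type*} [Field F] [DecidableEq F] (r s : F)
    (ℓ : Set ((F × F) × (F × F))) : Prop :=
  (∃ c : F × F, ℓ = vertLine c) ∨ ∃ m k : F × F, ℓ = slopeLine r s m k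

/-- A collineation of the Hall affine plane: a bijection of the point set mapping
every line onto a line. -/
def IsCollineation {F : Type*} [Field F] [DecidableEq F] (r s : F)
    (φ : (F × F) × (F × F) → (F × F) × (F × F)) : Prop :=
  Function.Bijective φ ∧ ∀ ℓ, IsHallLine r s ℓ → IsHallLine r s (φ '' ℓ)

/-- The BF lines: vertical lines and type 1 lines (slope in the basefield). -/
def BFlines {F : Type*} [Field F] [DecidableEq F] (r s : F) :
    Set (Set ((F × F) × (F × F))) :=
  {ℓ | (∃ c : F × F, ℓ = vertLine c) ∨ ∃ m k : F × F, m.2 = 0 ∧ ℓ = slopeLine r s m k}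

/-- The NBF lines: type 2 lines (slope not in the basefield). -/
def NBFlines {F : Type*} [Field F] [DecidableEq F] (r s : F) :
    Set (Set ((F × F) × (F × F))) :=
  {ℓ | ∃ m k : F × F, m.2 ≠ 0 ∧ ℓ = slopeLine r s m k}

set_option linter.unusedSectionVars false

namespace HallAux

lemma noroot {F : Type*} [Field F] (r s : F)
    (hirr : Irreducible (X ^ 2 - C r * X - C s : F[X])) (t : F) :
    t ^ 2 - r * t - s ≠ 0 := by
  intro h
  have hroot : IsRoot (X ^ 2 - C r * X - C s : F[X]) t := by
    simp [IsRoot, h]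
  have hdvd : (X - C t) ∣ (X ^ 2 - C r * X - C s : F[X]) := dvd_iff_isRoot.mpr hroot
  obtain ⟨g, hg⟩ := hdvd
  rcases hirr.isUnit_or_isUnit hg with h1 | h2
  · exact Polynomial.not_isUnit_X_sub_C t h1
  · have hdeg : (X ^ 2 - C r * X - C s : F[X]).natDegree = 2 := by
      compute_degree!
    have hg0 : g.natDegree = 0 := Polynomial.natDegree_eq_zero_of_isUnit h2
    have h3 := hg ▸ hdeg
    rw [Polynomial.natDegree_mul (fun hx => Polynomial.X_sub_C_ne_zero t hx) h2.ne_zero] at h3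
    simp [Polynomial.natDegree_X_sub_C, hg0] at h3

section
variable {F : Type*} [Field F] [DecidableEq F] (r s : F)

lemma hallMul_base (m1 : F) (x : F × F) :
    hallMul r s x (m1, 0) = (x.1 * m1, x.2 * m1) := by
  simp [hallMul]

lemma hallMul_ne {m : F × F} (hm2 : m.2 ≠ 0) (x : F × F) :
    hallMul r s x m = (x.1 * m.1 - x.2 * m.2⁻¹ * (m.1 ^ 2 - r * m.1 - s),
      x.1 * m.2 - x.2 * m.1 + x.2 * r) := by
  simp [hallMul, hm2]

lemma hallMul_add_left (x y m : F × F) :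
    hallMul r s (x + y) m = hallMul r s x m + hallMul r s y m := by
  by_cases hm : m.2 = 0 <;>
    simp [hallMul, hm, Prod.ext_iff] <;> constructor <;> ring

lemma hallMul_zero_left (m : F × F) : hallMul r s 0 m = 0 := by
  by_cases hm : m.2 = 0 <;> simp [hallMul, hm]

/-- explicit bijection between a slope line and `F × F`. -/
def slopeEquiv (m k : F × F) : (F × F) ≃ slopeLine r s m k where
  toFun x := ⟨(x, hallMul r s x m + k), rfl⟩
  invFun P := P.1.1
  left_inv x := rfl
  right_inv := by rintro ⟨⟨x, y⟩, hP⟩; simp only [slopeLine, Set.mem_setOf_eq] at hP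
                  simp [hP]

/-- explicit bijection between a vertical line and `F × F`. -/
def vertEquiv (c : F × F) : (F × F) ≃ vertLine c where
  toFun y := ⟨(c, y), rfl⟩
  invFun P := P.1.2
  left_inv y := rfl
  right_inv := by rintro ⟨⟨x, y⟩, hP⟩; simp only [vertLine, Set.mem_setOf_eq] at hP
                  simp [hP]

variable [Fintype F]

/-- For a bijection, a forward inclusion between two lines forces equality of images,
by counting. -/
lemma image_line_eq {φ : (F × F) × (F × F) → (F × F) × (F × F)}
    (hinj : Function.Injective φ) {S T : Set ((F × F) × (F × F))}
    (h1 : ∀ P ∈ S, φ P ∈ T) (eS : (F × F) ≃ S) (eT : (F × F) ≃ T) : φ '' S = T := by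
  apply Set.eq_of_subset_of_ncard_le
  · rintro _ ⟨P, hP, rfl⟩; exact h1 P hP
  · rw [Set.ncard_image_of_injective S hinj]
    have hS : S.ncard = Nat.card (F × F) := by
      rw [← Nat.card_coe_set_eq]; exact (Nat.card_congr eS).symm
    have hT : T.ncard = Nat.card (F × F) := by
      rw [← Nat.card_coe_set_eq]; exact (Nat.card_congr eT).symm
    rw [hS, hT]
  · exact Set.toFinite T

lemma image_vert_eq {φ : (F × F) × (F × F) → (F × F) × (F × F)}
    (hinj : Function.Injective φ) {S : Set ((F × F) × (F × F))} (c : F × F)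
    (eS : (F × F) ≃ S) (h1 : ∀ P ∈ S, φ P ∈ vertLine c) : φ '' S = vertLine c :=
  image_line_eq hinj h1 eS (vertEquiv c)

lemma image_slope_eq {φ : (F × F) × (F × F) → (F × F) × (F × F)}
    (hinj : Function.Injective φ) {S : Set ((F × F) × (F × F))} (m k : F × F)
    (eS : (F × F) ≃ S) (h1 : ∀ P ∈ S, φ P ∈ slopeLine r s m k) :
    φ '' S = slopeLine r s m k :=
  image_line_eq hinj h1 eS (slopeEquiv r s m k)

lemma comp_coll {φ ψ} (hφ : IsCollineation r s φ) (hψ : IsCollineation r s ψ) :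
    IsCollineation r s (φ ∘ ψ) :=
  ⟨hφ.1.comp hψ.1, fun ℓ hℓ => by
    rw [Set.image_comp]; exact hφ.2 _ (hψ.2 _ hℓ)⟩

/-! ### Translations -/

def trMap (t₁ t₂ : F × F) (P : (F × F) × (F × F)) : (F × F) × (F × F) :=
  (P.1 + t₁, P.2 + t₂)

lemma trMap_inv (t₁ t₂ : F × F) (P : (F × F) × (F × F)) :
    trMap t₁ t₂ (trMap (-t₁) (-t₂) P) = P := by
  simp [trMap]

lemma trMap_inv' (t₁ t₂ : F × F) (P : (F × F) × (F × F)) :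
    trMap (-t₁) (-t₂) (trMap t₁ t₂ P) = P := by
  simp [trMap]

lemma trMap_bij (t₁ t₂ : F × F) : Function.Bijective (trMap t₁ t₂) :=
  Function.bijective_iff_has_inverse.mpr
    ⟨trMap (-t₁) (-t₂), fun P => trMap_inv' t₁ t₂ P, fun P => trMap_inv t₁ t₂ P⟩

lemma trMap_vert (t₁ t₂ c : F × F) : trMap t₁ t₂ '' vertLine c = vertLine (c + t₁) := by
  apply image_vert_eq (trMap_bij t₁ t₂).1 _ (vertEquiv c)
  rintro ⟨x, y⟩ hP
  simp only [vertLine, Set.mem_setOf_eq] at hP ⊢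
  simp [trMap, hP]

lemma trMap_slope (t₁ t₂ m k : F × F) :
    trMap t₁ t₂ '' slopeLine r s m k
      = slopeLine r s m (k + t₂ - hallMul r s t₁ m) := by
  apply image_slope_eq r s (trMap_bij t₁ t₂).1 _ _ (slopeEquiv r s m k)
  rintro ⟨x, y⟩ hP
  simp only [slopeLine, Set.mem_setOf_eq] at hP ⊢
  simp only [trMap, hP, hallMul_add_left]
  abel

lemma trMap_coll (t₁ t₂ : F × F) : IsCollineation r s (trMap t₁ t₂) := by
  refine ⟨trMap_bij t₁ t₂, ?_⟩
  rintro ℓ (⟨c, rfl⟩ | ⟨m, k, rfl⟩)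
  · exact Or.inl ⟨c + t₁, trMap_vert t₁ t₂ c⟩
  · exact Or.inr ⟨m, _, trMap_slope r s t₁ t₂ m k⟩

/-! ### Maps of the form `(x, y) ↦ (xP, yP)` for `P ∈ GL₂(F)` -/

def lin (p q u v : F) (x : F × F) : F × F := (x.1 * p + x.2 * u, x.1 * q + x.2 * v)

def conjMap (p q u v : F) (P : (F × F) × (F × F)) : (F × F) × (F × F) :=
  (lin p q u v P.1, lin p q u v P.2)

/-- entries of `P⁻¹ M P` where `M` is the slope matrix of `m` (with `m.2 ≠ 0`). -/
def cA (p q u v : F) (m : F × F) : F :=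
  ((v * m.1 + q * (m.1 ^ 2 - r * m.1 - s) / m.2) * p + (v * m.2 - q * (r - m.1)) * u)
    / (p * v - q * u)

def cB (p q u v : F) (m : F × F) : F :=
  ((v * m.1 + q * (m.1 ^ 2 - r * m.1 - s) / m.2) * q + (v * m.2 - q * (r - m.1)) * v)
    / (p * v - q * u)

def cC (p q u v : F) (m : F × F) : F :=
  ((-(u * m.1) - p * (m.1 ^ 2 - r * m.1 - s) / m.2) * p + (-(u * m.2) + p * (r - m.1)) * u)
    / (p * v - q * u)

variable {p q u v : F} {m : F × F}

lemma trace_eq (hΔ : p * v - q * u ≠ 0) (hm2 : m.2 ≠ 0) :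
    cA r s p q u v m
      + ((-(u * m.1) - p * (m.1 ^ 2 - r * m.1 - s) / m.2) * q
          + (-(u * m.2) + p * (r - m.1)) * v) / (p * v - q * u) = r := by
  have _h1 : p * v - u * q ≠ 0 := by rwa [mul_comm u q]
  have _h2 : v * p - q * u ≠ 0 := by rwa [mul_comm v p]
  have _h3 : -(q * u) + v * p ≠ 0 := by rwa [neg_add_eq_sub, mul_comm v p]
  simp only [cA]
  field_simp
  ring

lemma fA_eq (hΔ : p * v - q * u ≠ 0) (hm2 : m.2 ≠ 0) :
    cA r s p q u v m ^ 2 - r * cA r s p q u v m - s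
      = -(cB r s p q u v m * cC r s p q u v m) := by
  have _h1 : p * v - u * q ≠ 0 := by rwa [mul_comm u q]
  have _h2 : v * p - q * u ≠ 0 := by rwa [mul_comm v p]
  have _h3 : -(q * u) + v * p ≠ 0 := by rwa [neg_add_eq_sub, mul_comm v p]
  simp only [cA, cB, cC]
  field_simp
  ring

lemma cB_ne (hΔ : p * v - q * u ≠ 0) (hm2 : m.2 ≠ 0)
    (hf : ∀ t : F, t ^ 2 - r * t - s ≠ 0) : cB r s p q u v m ≠ 0 := by
  intro hB
  apply hf (cA r s p q u v m)
  rw [fA_eq r s hΔ hm2, hB]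
  ring

lemma conj_key (hΔ : p * v - q * u ≠ 0) (hm2 : m.2 ≠ 0)
    (hf : ∀ t : F, t ^ 2 - r * t - s ≠ 0) (x : F × F) :
    lin p q u v (hallMul r s x m)
      = hallMul r s (lin p q u v x) (cA r s p q u v m, cB r s p q u v m) := by
  have hB := cB_ne r s hΔ hm2 hf
  have _h1 : p * v - u * q ≠ 0 := by rwa [mul_comm u q]
  have _h2 : v * p - q * u ≠ 0 := by rwa [mul_comm v p]
  have _h3 : -(q * u) + v * p ≠ 0 := by rwa [neg_add_eq_sub, mul_comm v p]
  rw [show hallMul r s x m = (x.1 * m.1 - x.2 * m.2⁻¹ * (m.1 ^ 2 - r * m.1 - s),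
        x.1 * m.2 - x.2 * m.1 + x.2 * r) from by simp [hallMul, hm2],
      show ∀ y : F × F, hallMul r s y (cA r s p q u v m, cB r s p q u v m)
        = (y.1 * cA r s p q u v m - y.2 * (cB r s p q u v m)⁻¹ *
            (cA r s p q u v m ^ 2 - r * cA r s p q u v m - s),
          y.1 * cB r s p q u v m - y.2 * cA r s p q u v m + y.2 * r) from
        fun y => by simp [hallMul, hB]]
  rw [fA_eq r s hΔ hm2]
  simp only [lin, Prod.ext_iff]
  constructor
  · rw [show ∀ a b c : F, a - b * (cB r s p q u v m)⁻¹ * -(cB r s p q u v m * c)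
        = a + b * c from fun a b c => by field_simp; ring]
    simp only [cA, cC]
    field_simp
    ring
  · simp only [cA, cB]
    field_simp
    ring

lemma lin_add (x y : F × F) : lin p q u v (x + y) = lin p q u v x + lin p q u v y := by
  simp [lin, Prod.ext_iff]; constructor <;> ring

lemma lin_inv₁ (hΔ : p * v - q * u ≠ 0) (x : F × F) :
    lin (v / (p * v - q * u)) (-q / (p * v - q * u)) (-u / (p * v - q * u))
      (p / (p * v - q * u)) (lin p q u v x) = x := by
  have _h1 : p * v - u * q ≠ 0 := by rwa [mul_comm u q]
  have _h2 : v * p - q * u ≠ 0 := by rwa [mul_comm v p]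
  have _h3 : -(q * u) + v * p ≠ 0 := by rwa [neg_add_eq_sub, mul_comm v p]
  simp only [lin, Prod.ext_iff]
  constructor <;> (field_simp; ring)

lemma lin_inv₂ (hΔ : p * v - q * u ≠ 0) (x : F × F) :
    lin p q u v (lin (v / (p * v - q * u)) (-q / (p * v - q * u)) (-u / (p * v - q * u))
      (p / (p * v - q * u)) x) = x := by
  have _h1 : p * v - u * q ≠ 0 := by rwa [mul_comm u q]
  have _h2 : v * p - q * u ≠ 0 := by rwa [mul_comm v p]
  have _h3 : -(q * u) + v * p ≠ 0 := by rwa [neg_add_eq_sub, mul_comm v p]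
  simp only [lin, Prod.ext_iff]
  constructor <;> (field_simp; ring)

lemma lin_slope0 (hm2 : m.2 = 0) (x : F × F) :
    lin p q u v (hallMul r s x m) = hallMul r s (lin p q u v x) m := by
  simp [hallMul, hm2, lin, Prod.ext_iff]
  constructor <;> ring

lemma conjMap_bij (hΔ : p * v - q * u ≠ 0) : Function.Bijective (conjMap p q u v) :=
  Function.bijective_iff_has_inverse.mpr
    ⟨conjMap (v / (p * v - q * u)) (-q / (p * v - q * u)) (-u / (p * v - q * u))
        (p / (p * v - q * u)),
      fun P => by simp [conjMap, lin_inv₁ hΔ], fun P => by simp [conjMap, lin_inv₂ hΔ]⟩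

lemma conjMap_vert (hΔ : p * v - q * u ≠ 0) (c : F × F) :
    conjMap p q u v '' vertLine c = vertLine (lin p q u v c) := by
  apply image_vert_eq (conjMap_bij hΔ).1 _ (vertEquiv c)
  rintro ⟨x, y⟩ hP
  simp only [vertLine, Set.mem_setOf_eq] at hP ⊢
  simp [conjMap, hP]

lemma conjMap_slope0 (hΔ : p * v - q * u ≠ 0) (hm2 : m.2 = 0) (k : F × F) :
    conjMap p q u v '' slopeLine r s m k = slopeLine r s m (lin p q u v k) := by
  apply image_slope_eq r s (conjMap_bij hΔ).1 _ _ (slopeEquiv r s m k)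
  rintro ⟨x, y⟩ hP
  simp only [slopeLine, Set.mem_setOf_eq] at hP ⊢
  simp only [conjMap, hP, lin_add, lin_slope0 r s hm2]

lemma conjMap_slope2 (hΔ : p * v - q * u ≠ 0) (hm2 : m.2 ≠ 0)
    (hf : ∀ t : F, t ^ 2 - r * t - s ≠ 0) (k : F × F) :
    conjMap p q u v '' slopeLine r s m k
      = slopeLine r s (cA r s p q u v m, cB r s p q u v m) (lin p q u v k) := by
  apply image_slope_eq r s (conjMap_bij hΔ).1 _ _ (slopeEquiv r s m k)
  rintro ⟨x, y⟩ hP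
  simp only [slopeLine, Set.mem_setOf_eq] at hP ⊢
  simp only [conjMap, hP, lin_add, conj_key r s hΔ hm2 hf]

lemma conjMap_coll (hΔ : p * v - q * u ≠ 0) (hf : ∀ t : F, t ^ 2 - r * t - s ≠ 0) :
    IsCollineation r s (conjMap p q u v) := by
  refine ⟨conjMap_bij hΔ, ?_⟩
  rintro ℓ (⟨c, rfl⟩ | ⟨m, k, rfl⟩)
  · exact Or.inl ⟨_, conjMap_vert hΔ c⟩
  · by_cases hm2 : m.2 = 0
    · exact Or.inr ⟨m, _, conjMap_slope0 r s hΔ hm2 k⟩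
    · exact Or.inr ⟨_, _, conjMap_slope2 r s hΔ hm2 hf k⟩

/-! ### Torus maps -/

def torMap (a b : F) (P : (F × F) × (F × F)) : (F × F) × (F × F) :=
  ((a * P.1.1 + b * P.2.1, a * P.1.2 + b * P.2.2),
   (b * s * P.1.1 + (a + b * r) * P.2.1, b * s * P.1.2 + (a + b * r) * P.2.2))

variable {a b : F}

lemma tordet_ne (hf : ∀ t : F, t ^ 2 - r * t - s ≠ 0) (hb : b ≠ 0) :
    a ^ 2 + r * a * b - s * b ^ 2 ≠ 0 := by
  intro h
  apply hf (-(a / b))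
  field_simp
  linear_combination h

lemma torMap_inv (hΔ : a ^ 2 + r * a * b - s * b ^ 2 ≠ 0) (P : (F × F) × (F × F)) :
    torMap r s a b (torMap r s ((a + r * b) / (a ^ 2 + r * a * b - s * b ^ 2))
      (-b / (a ^ 2 + r * a * b - s * b ^ 2)) P) = P := by
  have _h1 : a * (a + r * b) - b ^ 2 * s ≠ 0 := by intro h; apply hΔ; linear_combination h
  have _h2 : a * (a + b * r) - b ^ 2 * s ≠ 0 := by intro h; apply hΔ; linear_combination h
  simp only [torMap, Prod.ext_iff]
  refine ⟨⟨?_, ?_⟩, ?_, ?_⟩ <;> (field_simp; ring)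

lemma torMap_inv' (hΔ : a ^ 2 + r * a * b - s * b ^ 2 ≠ 0) (P : (F × F) × (F × F)) :
    torMap r s ((a + r * b) / (a ^ 2 + r * a * b - s * b ^ 2))
      (-b / (a ^ 2 + r * a * b - s * b ^ 2)) (torMap r s a b P) = P := by
  have _h1 : a * (a + r * b) - b ^ 2 * s ≠ 0 := by intro h; apply hΔ; linear_combination h
  have _h2 : a * (a + b * r) - b ^ 2 * s ≠ 0 := by intro h; apply hΔ; linear_combination h
  simp only [torMap, Prod.ext_iff]
  refine ⟨⟨?_, ?_⟩, ?_, ?_⟩ <;> (field_simp; ring)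

lemma torMap_bij (hΔ : a ^ 2 + r * a * b - s * b ^ 2 ≠ 0) :
    Function.Bijective (torMap r s a b) :=
  Function.bijective_iff_has_inverse.mpr
    ⟨torMap r s ((a + r * b) / (a ^ 2 + r * a * b - s * b ^ 2))
        (-b / (a ^ 2 + r * a * b - s * b ^ 2)),
      fun P => torMap_inv' r s hΔ P, fun P => torMap_inv r s hΔ P⟩

lemma torMap_vert (hf : ∀ t : F, t ^ 2 - r * t - s ≠ 0) (hb : b ≠ 0) (c : F × F) :
    torMap r s a b '' vertLine c
      = slopeLine r s ((a + b * r) / b, 0)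
          ((-(a ^ 2 + r * a * b - s * b ^ 2) / b) * c.1,
           (-(a ^ 2 + r * a * b - s * b ^ 2) / b) * c.2) := by
  have hΔ : a ^ 2 + r * a * b - s * b ^ 2 ≠ 0 := tordet_ne r s hf hb
  apply image_slope_eq r s (torMap_bij r s hΔ).1 _ _ (vertEquiv c)
  rintro ⟨x, y⟩ hP
  simp only [vertLine, Set.mem_setOf_eq] at hP
  subst hP
  simp only [slopeLine, Set.mem_setOf_eq, torMap, hallMul_base, Prod.mk_add_mk,
    Prod.ext_iff]
  constructor <;> (field_simp; ring)

lemma torMap_slope0 (hf : ∀ t : F, t ^ 2 - r * t - s ≠ 0) (hb : b ≠ 0) (m1 : F)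
    (h0 : a + b * m1 ≠ 0) (k : F × F) :
    torMap r s a b '' slopeLine r s (m1, 0) k
      = slopeLine r s ((b * s + (a + b * r) * m1) / (a + b * m1), 0)
          (((a + b * r) - (b * s + (a + b * r) * m1) / (a + b * m1) * b) * k.1,
           ((a + b * r) - (b * s + (a + b * r) * m1) / (a + b * m1) * b) * k.2) := by
  have hΔ : a ^ 2 + r * a * b - s * b ^ 2 ≠ 0 := tordet_ne r s hf hb
  apply image_slope_eq r s (torMap_bij r s hΔ).1 _ _ (slopeEquiv r s (m1, 0) k)
  rintro ⟨⟨x1, x2⟩, ⟨y1, y2⟩⟩ hP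
  simp only [slopeLine, Set.mem_setOf_eq, hallMul_base, Prod.mk_add_mk, Prod.fst_add,
    Prod.snd_add, Prod.ext_iff] at hP
  obtain ⟨h1, h2⟩ := hP
  subst h1 h2
  simp only [slopeLine, Set.mem_setOf_eq, torMap, hallMul_base, Prod.mk_add_mk,
    Prod.fst_add, Prod.snd_add, Prod.ext_iff]
  constructor <;> (field_simp; ring)

set_option maxHeartbeats 1000000 in
lemma torMap_slope0' (hf : ∀ t : F, t ^ 2 - r * t - s ≠ 0) (hb : b ≠ 0) (m1 : F)
    (h0 : a + b * m1 = 0) (k : F × F) :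
    torMap r s a b '' slopeLine r s (m1, 0) k = vertLine (b * k.1, b * k.2) := by
  have hΔ : a ^ 2 + r * a * b - s * b ^ 2 ≠ 0 := tordet_ne r s hf hb
  have hm1 : m1 = -(a / b) := by field_simp; linear_combination h0
  subst hm1
  apply image_vert_eq (torMap_bij r s hΔ).1 _ (slopeEquiv r s (-(a / b), 0) k)
  rintro ⟨⟨x1, x2⟩, ⟨y1, y2⟩⟩ hP
  simp only [slopeLine, Set.mem_setOf_eq, hallMul_base, Prod.mk_add_mk, Prod.fst_add,
    Prod.snd_add, Prod.ext_iff] at hP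
  obtain ⟨h1, h2⟩ := hP
  subst h1 h2
  simp only [vertLine, Set.mem_setOf_eq, torMap, Prod.ext_iff]
  constructor <;> (field_simp; ring)

set_option maxHeartbeats 1000000 in
lemma torMap_slope2 (hf : ∀ t : F, t ^ 2 - r * t - s ≠ 0) (hb : b ≠ 0)
    (hm2 : m.2 ≠ 0) (k : F × F) :
    torMap r s a b '' slopeLine r s m k
      = slopeLine r s m
          (((a + b * r) * k.1, (a + b * r) * k.2) - hallMul r s (b * k.1, b * k.2) m) := by
  have hΔ : a ^ 2 + r * a * b - s * b ^ 2 ≠ 0 := tordet_ne r s hf hb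
  apply image_slope_eq r s (torMap_bij r s hΔ).1 _ _ (slopeEquiv r s m k)
  rintro ⟨⟨x1, x2⟩, ⟨y1, y2⟩⟩ hP
  simp only [slopeLine, Set.mem_setOf_eq, hallMul_ne r s hm2, Prod.mk_add_mk,
    Prod.mk_sub_mk, Prod.fst_add, Prod.snd_add, Prod.fst_sub, Prod.snd_sub,
    Prod.ext_iff] at hP
  obtain ⟨h1, h2⟩ := hP
  subst h1 h2
  simp only [slopeLine, Set.mem_setOf_eq, torMap, hallMul_ne r s hm2, Prod.mk_add_mk,
    Prod.mk_sub_mk, Prod.fst_add, Prod.snd_add, Prod.fst_sub, Prod.snd_sub,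
    Prod.ext_iff]
  constructor <;> (field_simp; ring)

lemma torMap_coll (hf : ∀ t : F, t ^ 2 - r * t - s ≠ 0) (hb : b ≠ 0) :
    IsCollineation r s (torMap r s a b) := by
  have hΔ : a ^ 2 + r * a * b - s * b ^ 2 ≠ 0 := tordet_ne r s hf hb
  refine ⟨torMap_bij r s hΔ, ?_⟩
  rintro ℓ (⟨c, rfl⟩ | ⟨m, k, rfl⟩)
  · exact Or.inr ⟨_, _, torMap_vert r s hf hb c⟩
  · by_cases hm2 : m.2 = 0
    · obtain ⟨m1, m2⟩ := m
      simp only at hm2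
      subst hm2
      by_cases h0 : a + b * m1 = 0
      · exact Or.inl ⟨_, torMap_slope0' r s hf hb m1 h0 k⟩
      · exact Or.inr ⟨_, _, torMap_slope0 r s hf hb m1 h0 k⟩
    · exact Or.inr ⟨_, _, torMap_slope2 r s hf hb hm2 k⟩

/-! ### Moving BF lines to the vertical line through the origin -/

lemma BF_to_vert0 (hf : ∀ t : F, t ^ 2 - r * t - s ≠ 0)
    {ℓ : Set ((F × F) × (F × F))} (hℓ : ℓ ∈ BFlines r s) :
    ∃ φ ψ, IsCollineation r s φ ∧ IsCollineation r s ψ ∧ (∀ P, ψ (φ P) = P) ∧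
      φ '' ℓ = vertLine 0 := by
  rcases hℓ with ⟨c, rfl⟩ | ⟨m, k, hm2, rfl⟩
  · refine ⟨trMap (-c) 0, trMap c 0, trMap_coll r s (-c) 0, trMap_coll r s c 0,
      fun P => by simp [trMap], ?_⟩
    simpa using trMap_vert (-c) 0 c
  · obtain ⟨m1, m2⟩ := m
    simp only at hm2
    subst hm2
    have hb : (1 : F) ≠ 0 := one_ne_zero
    have hΔ : (-m1) ^ 2 + r * (-m1) * 1 - s * 1 ^ 2 ≠ 0 := tordet_ne r s hf hb
    have hb' : -1 / ((-m1) ^ 2 + r * (-m1) * 1 - s * 1 ^ 2) ≠ 0 :=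
      div_ne_zero (neg_ne_zero.mpr one_ne_zero) hΔ
    refine ⟨trMap (-(1 * k.1, 1 * k.2)) 0 ∘ torMap r s (-m1) 1,
      torMap r s ((-m1 + r * 1) / ((-m1) ^ 2 + r * (-m1) * 1 - s * 1 ^ 2))
          (-1 / ((-m1) ^ 2 + r * (-m1) * 1 - s * 1 ^ 2)) ∘ trMap (1 * k.1, 1 * k.2) 0,
      comp_coll r s (trMap_coll r s _ _) (torMap_coll r s hf hb),
      comp_coll r s (torMap_coll r s hf hb') (trMap_coll r s _ _),
      ?_, ?_⟩
    · intro P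
      have h1 : trMap ((1 * k.1, 1 * k.2)) 0 (trMap (-(1 * k.1, 1 * k.2)) 0
          (torMap r s (-m1) 1 P)) = torMap r s (-m1) 1 P := by
        simp [trMap]
      simp only [Function.comp_apply, h1]
      exact torMap_inv' r s hΔ P
    · rw [Set.image_comp, torMap_slope0' r s hf hb m1 (by ring) k, trMap_vert]
      simp

/-! ### Moving NBF lines to the line `[(0,1), 0]` -/

lemma NBF_to_base (hf : ∀ t : F, t ^ 2 - r * t - s ≠ 0) (hm2 : m.2 ≠ 0) (k : F × F) :
    ∃ φ ψ, IsCollineation r s φ ∧ IsCollineation r s ψ ∧ (∀ P, ψ (φ P) = P) ∧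
      φ '' slopeLine r s m k = slopeLine r s ((0 : F), (1 : F)) 0 := by
  set p := m.1 - r with hp
  set q := (1 : F) with hq
  set u := -((m.1 ^ 2 - r * m.1 - s) / m.2) with hu
  set v := (0 : F) with hv
  have hΔ0 : (m.1 - r) * 0 - 1 * -((m.1 ^ 2 - r * m.1 - s) / m.2) ≠ 0 := by
    simpa using div_ne_zero (hf m.1) hm2
  have hΔ : p * v - q * u ≠ 0 := by
    rw [hp, hq, hu, hv]
    exact hΔ0
  have hAB : ((cA r s p q u v m, cB r s p q u v m) : F × F) = ((0 : F), (1 : F)) := by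
    rw [Prod.ext_iff]
    constructor
    · simp only [cA, hp, hq, hu, hv]
      rw [_root_.div_eq_zero_iff]
      left
      ring
    · simp only [cB, hp, hq, hu, hv]
      rw [div_eq_one_iff_eq hΔ0]
      ring
  have hΔ' : (v / (p * v - q * u)) * (p / (p * v - q * u))
      - (-q / (p * v - q * u)) * (-u / (p * v - q * u)) ≠ 0 := by
    intro h
    apply hΔ
    field_simp at h
    rw [one_div, inv_eq_zero] at h
    linear_combination h
  refine ⟨trMap 0 (-(lin p q u v k)) ∘ conjMap p q u v,
    conjMap (v / (p * v - q * u)) (-q / (p * v - q * u)) (-u / (p * v - q * u))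
        (p / (p * v - q * u)) ∘ trMap 0 (lin p q u v k),
    comp_coll r s (trMap_coll r s _ _) (conjMap_coll r s hΔ hf),
    comp_coll r s (conjMap_coll r s hΔ' hf) (trMap_coll r s _ _),
    ?_, ?_⟩
  · intro P
    have h1 : trMap 0 (lin p q u v k) (trMap 0 (-(lin p q u v k))
        (conjMap p q u v P)) = conjMap p q u v P := by
      simp [trMap]
    simp only [Function.comp_apply, h1]
    simp [conjMap, lin_inv₁ hΔ]
  · rw [Set.image_comp, conjMap_slope2 r s hΔ hm2 hf k, hAB, trMap_slope]
    simp [hallMul_zero_left, hv, hq]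

end

end HallAux

/-- Any two BF lines lie in the same orbit of the collineation group of the Hall affine
plane, and any two NBF lines lie in the same orbit; since every line is a BF line or an
NBF line, the collineation group has at most two orbits on lines. -/
theorem two_line_orbits {F : Type*} [Field F] [Fintype F] [DecidableEq F]
    (q : ℕ) (hq : Fintype.card F = q) (r s : F)
    (hirr : Irreducible (X ^ 2 - C r * X - C s : F[X])) :
    (∀ ℓ ℓ' : Set ((F × F) × (F × F)), ℓ ∈ BFlines r s → ℓ' ∈ BFlines r s →
      ∃ φ, IsCollineation r s φ ∧ φ '' ℓ = ℓ') ∧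
    (∀ ℓ ℓ' : Set ((F × F) × (F × F)), ℓ ∈ NBFlines r s → ℓ' ∈ NBFlines r s →
      ∃ φ, IsCollineation r s φ ∧ φ '' ℓ = ℓ') ∧
    (∀ ℓ, IsHallLine r s ℓ → ℓ ∈ BFlines r s ∨ ℓ ∈ NBFlines r s) := by
  have hf := HallAux.noroot r s hirr
  refine ⟨?_, ?_, ?_⟩
  · intro ℓ ℓ' hℓ hℓ'
    obtain ⟨φ, ψ, hφ, hψ, hinv, him⟩ := HallAux.BF_to_vert0 r s hf hℓ
    obtain ⟨φ', ψ', hφ', hψ', hinv', him'⟩ := HallAux.BF_to_vert0 r s hf hℓ'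
    refine ⟨ψ' ∘ φ, HallAux.comp_coll r s hψ' hφ, ?_⟩
    rw [Set.image_comp, him, ← him', ← Set.image_comp]
    have hid : ψ' ∘ φ' = id := funext hinv'
    rw [hid, Set.image_id]
  · intro ℓ ℓ' hℓ hℓ'
    obtain ⟨m, k, hm2, rfl⟩ := hℓ
    obtain ⟨m', k', hm2', rfl⟩ := hℓ'
    obtain ⟨φ, ψ, hφ, hψ, hinv, him⟩ := HallAux.NBF_to_base r s hf hm2 k
    obtain ⟨φ', ψ', hφ', hψ', hinv', him'⟩ := HallAux.NBF_to_base r s hf hm2' k'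
    refine ⟨ψ' ∘ φ, HallAux.comp_coll r s hψ' hφ, ?_⟩
    rw [Set.image_comp, him, ← him', ← Set.image_comp]
    have hid : ψ' ∘ φ' = id := funext hinv'
    rw [hid, Set.image_id]
  · rintro ℓ (⟨c, rfl⟩ | ⟨m, k, rfl⟩)
    · exact Or.inl (Or.inl ⟨c, rfl⟩)
    · by_cases hm2 : m.2 = 0
      · exact Or.inl (Or.inr ⟨m, k, hm2, rfl⟩)
      · exact Or.inr ⟨m, k, hm2, rfl⟩
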